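/- Let G = (V, E, w) be a weighted directed graph with nonnegative integer edge weights, let d be a positive integer, let A_in, A_out ⊆ V, and let E^rem ⊇ δ⁻(A_in) ∪ δ⁺(A_out). Suppose every vertex v ∈ V \ (A_in ∪ A_out) satisfies |Ball^in_G(v, d/4)| > |V|/2 and |Ball^out_G(v, d/4)| > |V|/2. Then every strongly connected component C of (V, E \ E^rem) with C ⊆ V \ (A_in ∪ A_out) has weak diameter at most d in G; indeed, for any u, v ∈ V \ (A_in ∪ A_out), dist_G(u, v) ≤ d/2. -/

import Mathlib

open Real

/-- A walk from `u` to `v` along the edge set `E`; the list records the vertices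
visited after `u` (so `[]` is the empty walk, requiring `u = v`). -/
def IsWalk {V : Type*} (E : Set (V × V)) : V → V → List V → Prop
  | u, v, [] => u = v
  | u, v, x :: xs => (u, x) ∈ E ∧ IsWalk E x v xs

/-- The weight of a walk starting at `u` whose subsequent vertices are given by the list. -/
def walkWeight {V : Type*} (w : V × V → ℤ) : V → List V → ℤ
  | _, [] => 0
  | u, x :: xs => w (u, x) + walkWeight w x xs

/-- The number of negative-weight edges on a walk. -/
def countNeg {V : Type*} (w : V × V → ℤ) : V → List V → ℕ
  | _, [] => 0
  | u, x :: xs => (if w (u, x) < 0 then 1 else 0) + countNeg w x xs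

/-- `dist_G(u,v) ≤ r` : there exists a walk from `u` to `v` of weight at most `r`. -/
def DistLE {V : Type*} (E : Set (V × V)) (w : V × V → ℤ) (u v : V) (r : ℝ) : Prop :=
  ∃ p, IsWalk E u v p ∧ (walkWeight w u p : ℝ) ≤ r

/-- `Ball^in_G(v, r) = {u : dist_G(u,v) ≤ r}`. -/
def ballIn {V : Type*} (E : Set (V × V)) (w : V × V → ℤ) (v : V) (r : ℝ) : Set V :=
  {u | DistLE E w u v r}

/-- `Ball^out_G(u, r) = {v : dist_G(u,v) ≤ r}`. -/
def ballOut {V : Type*} (E : Set (V × V)) (w : V × V → ℤ) (u : V) (r : ℝ) : Set V :=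
  {v | DistLE E w u v r}

/-- There is a walk from `u` to `v`. -/
def Reach {V : Type*} (E : Set (V × V)) (u v : V) : Prop := ∃ p, IsWalk E u v p

/-- `u` and `v` lie in the same strongly connected component. -/
def SameSCC {V : Type*} (E : Set (V × V)) (u v : V) : Prop := Reach E u v ∧ Reach E v u

/-- `C` is a strongly connected component (an equivalence class of `SameSCC`). -/
def IsSCCOf {V : Type*} (E : Set (V × V)) (C : Set V) : Prop :=
  ∃ v, C = {u | SameSCC E u v}

/-- `D` is the (attained) minimum weight of a walk from `u` to `v`. -/
def IsMinDist {V : Type*} (E : Set (V × V)) (w : V × V → ℤ) (u v : V) (D : ℤ) : Prop :=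
  (∃ p, IsWalk E u v p ∧ walkWeight w u p = D) ∧
    ∀ p, IsWalk E u v p → D ≤ walkWeight w u p


lemma isWalk_append {V : Type*} (E : Set (V × V)) :
    ∀ (p : List V) (u x v : V) (q : List V), IsWalk E u x p → IsWalk E x v q →
      IsWalk E u v (p ++ q)
  | [], u, x, v, q, hp, hq => by cases hp; exact hq
  | a :: p, u, x, v, q, hp, hq =>
      ⟨hp.1, isWalk_append E p a x v q hp.2 hq⟩

lemma walkWeight_append {V : Type*} (w : V × V → ℤ) :
    ∀ (p : List V) (u : V) (q : List V),
      walkWeight w u (p ++ q) = walkWeight w u p + walkWeight w (p.getLastD u) q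
  | [], u, q => by simp [walkWeight]
  | a :: p, u, q => by
      simp only [List.cons_append, walkWeight, List.getLastD_cons, add_assoc]
      rw [walkWeight_append w p a q]

lemma isWalk_last {V : Type*} (E : Set (V × V)) :
    ∀ (p : List V) (u v : V), IsWalk E u v p → p.getLastD u = v
  | [], u, v, h => h
  | a :: p, u, v, h => by
      have := isWalk_last E p a v h.2
      cases p <;> simpa [List.getLastD] using this

/-- If every vertex outside `A_in ∪ A_out` has in- and out-balls of radius
`d/4` containing more than half the vertices, then any two such vertices are at distance at
most `d/2`, and every SCC of `(V, E \ E^rem)` contained in `V \ (A_in ∪ A_out)` has weak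
diameter at most `d` in `G`. -/
theorem heavy_scc_weak_diameter {V : Type*} [Fintype V] (E : Set (V × V)) (w : V × V → ℤ)
    (hw : ∀ e ∈ E, 0 ≤ w e) (d : ℕ) (hd : 0 < d)
    (Ain Aout : Set V) (Erem : Set (V × V))
    (hErem : {e ∈ E | e.1 ∉ Ain ∧ e.2 ∈ Ain} ∪ {e ∈ E | e.1 ∈ Aout ∧ e.2 ∉ Aout} ⊆ Erem)
    (hheavy : ∀ v : V, v ∉ Ain ∪ Aout →
      (Fintype.card V : ℝ) / 2 < ((ballIn E w v ((d : ℝ) / 4)).ncard : ℝ) ∧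
      (Fintype.card V : ℝ) / 2 < ((ballOut E w v ((d : ℝ) / 4)).ncard : ℝ)) :
    (∀ u v : V, u ∉ Ain ∪ Aout → v ∉ Ain ∪ Aout → DistLE E w u v ((d : ℝ) / 2)) ∧
    (∀ C : Set V, IsSCCOf (E \ Erem) C → C ⊆ Set.univ \ (Ain ∪ Aout) →
      ∀ u ∈ C, ∀ v ∈ C, DistLE E w u v (d : ℝ) ∧ DistLE E w v u (d : ℝ)) :=  by
  have key : ∀ u v : V, u ∉ Ain ∪ Aout → v ∉ Ain ∪ Aout → DistLE E w u v ((d : ℝ) / 2) := by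
    intro u v hu hv
    have h1 := (hheavy u hu).2
    have h2 := (hheavy v hv).1
    set s := ballOut E w u ((d : ℝ) / 4)
    set t := ballIn E w v ((d : ℝ) / 4)
    have hnc : (Fintype.card V : ℝ) < (s.ncard : ℝ) + (t.ncard : ℝ) := by
      linarith
    have hun : ((s ∪ t).ncard : ℝ) ≤ (Fintype.card V : ℝ) := by
      have := Set.ncard_le_ncard (Set.subset_univ (s ∪ t)) (Set.finite_univ)
      rw [Set.ncard_univ, Nat.card_eq_fintype_card] at this
      exact_mod_cast this
    have hint : (s ∩ t).Nonempty := by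
      rw [Set.nonempty_iff_ne_empty]
      intro he
      have := Set.ncard_inter_add_ncard_union s t (Set.toFinite s) (Set.toFinite t)
      rw [he, Set.ncard_empty, zero_add] at this
      have : (s.ncard : ℝ) + (t.ncard : ℝ) = ((s ∪ t).ncard : ℝ) := by exact_mod_cast this.symm
      linarith
    obtain ⟨x, hxs, hxt⟩ := hint
    obtain ⟨p, hp, hpw⟩ := hxs
    obtain ⟨q, hq, hqw⟩ := hxt
    refine ⟨p ++ q, isWalk_append E p u x v q hp hq, ?_⟩
    rw [walkWeight_append w p u q, isWalk_last E p u x hp]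
    push_cast
    linarith
  refine ⟨key, ?_⟩
  intro C hscc hC u hu v hv
  have hu' : u ∉ Ain ∪ Aout := (hC hu).2
  have hv' : v ∉ Ain ∪ Aout := (hC hv).2
  have hhalf : (d : ℝ) / 2 ≤ (d : ℝ) := by
    have : (0:ℝ) ≤ d := Nat.cast_nonneg d
    linarith
  obtain ⟨p, hp, hpw⟩ := key u v hu' hv'
  obtain ⟨q, hq, hqw⟩ := key v u hv' hu'
  exact ⟨⟨p, hp, hpw.trans hhalf⟩, ⟨q, hq, hqw.trans hhalf⟩⟩
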